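/- Suppose a = 2 (so a² < 4q automatically, since q ≥ 2). Then |M(X)| ≤ q^{X/2} for every positive integer X. Moreover, if arccos(1/√q)/π is irrational, then for every ε > 0 there exist infinitely many positive integers X with |M(X)| > (1 − ε)·q^{X/2}. -/

import Mathlib

open Real Filter Topology

/-- The coefficient sequence `c_N` with `c_0 = 1`, `c_1 = a - q - 1`,
`c_2 = a*c_1 - q*c_0 + q`, and `c_N = a*c_{N-1} - q*c_{N-2}` for `N ≥ 3`;
these are the Taylor coefficients at `u = 0` of `(1-u)(1-qu)/(1-au+qu²)`,
the reciprocal of the zeta function of an elliptic curve over `F_q` with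
Frobenius trace `a`. -/
def mertC (q a : ℤ) : ℕ → ℤ
  | 0 => 1
  | 1 => a - q - 1
  | 2 => a * (a - q - 1) - q * 1 + q
  | (N + 3) => a * mertC q a (N + 2) - q * mertC q a (N + 1)

/-- `M(X) = ∑_{N=0}^{X-1} c_N`, the Mertens summatory function of the
Möbius function of an elliptic curve over `F_q` with Frobenius trace `a`. -/
def mertM (q a : ℤ) (X : ℕ) : ℤ := ∑ N ∈ Finset.range X, mertC q a N

lemma mertM_succ (q a : ℤ) (X : ℕ) : mertM q a (X+1) = mertM q a X + mertC q a X :=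
  Finset.sum_range_succ _ _

lemma mertM_rec (q : ℤ) : ∀ X : ℕ,
    mertM q 2 (X+3) = 2 * mertM q 2 (X+2) - q * mertM q 2 (X+1)
  | 0 => by
      simp [mertM, mertC, Finset.sum_range_succ]
      ring
  | (X+1) => by
      have h := mertM_rec q X
      have hc : mertC q 2 (X+3) = 2 * mertC q 2 (X+2) - q * mertC q 2 (X+1) := rfl
      have e1 := mertM_succ q 2 (X+3)
      have e2 := mertM_succ q 2 (X+2)
      have e3 := mertM_succ q 2 (X+1)
      linear_combination e1 - 2*e2 + q*e3 + h + hc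

lemma mertM_formula (q : ℤ) (hq : 2 ≤ q) (X : ℕ) :
    ((mertM q 2 (X+1) : ℤ) : ℝ) =
      Real.sqrt (q:ℝ) ^ (X+1) *
        Real.cos ((X+1) * Real.arccos (1 / Real.sqrt (q:ℝ))) := by
  have hq2 : (2:ℝ) ≤ (q:ℝ) := by exact_mod_cast hq
  have hq0 : (0:ℝ) < (q:ℝ) := by linarith
  have hq1 : (1:ℝ) ≤ (q:ℝ) := by linarith
  set s : ℝ := Real.sqrt ((q:ℝ) - 1) with hs_def
  set θ : ℝ := Real.arccos (1 / Real.sqrt (q:ℝ)) with hθ_def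
  set α : ℂ := 1 + (s:ℂ) * Complex.I with hα_def
  have hs2 : ((s:ℂ))^2 = (q:ℂ) - 1 := by
    have h : s^2 = (q:ℝ) - 1 := Real.sq_sqrt (by linarith)
    rw [show ((s:ℂ))^2 = ((s^2 : ℝ) : ℂ) by push_cast; ring, h]
    push_cast
    ring
  have hα2 : α^2 = 2*α - (q:ℂ) := by
    rw [hα_def]
    linear_combination ((s:ℂ))^2 * Complex.I_sq - hs2
  -- step recurrence for powers
  have hpow : ∀ Y : ℕ, α^(Y+3) = 2*α^(Y+2) - (q:ℂ)*α^(Y+1) := by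
    intro Y
    calc α^(Y+3) = α^(Y+1) * α^2 := by ring
    _ = α^(Y+1) * (2*α - (q:ℂ)) := by rw [hα2]
    _ = 2*α^(Y+2) - (q:ℂ)*α^(Y+1) := by ring
  have hre : ∀ Y : ℕ, ((mertM q 2 (Y+1) : ℤ) : ℝ) = (α ^ (Y+1)).re := by
    intro Y
    induction Y using Nat.twoStepInduction with
    | zero =>
        simp [mertM, mertC, Finset.sum_range_succ, hα_def]
    | one =>
        have h2 : mertM q 2 2 = 2 - q := by
          simp [mertM, mertC, Finset.sum_range_succ]
        rw [h2, hα2]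
        push_cast
        simp [hα_def]
    | more Y ih1 ih2 =>
        have hr := mertM_rec q Y
        rw [hr, hpow Y]
        push_cast
        rw [ih1, ih2]
        simp [Complex.sub_re, Complex.mul_re]
  -- polar form
  have hsqrt_pos : 0 < Real.sqrt (q:ℝ) := Real.sqrt_pos.2 hq0
  have hsq1 : 1 ≤ Real.sqrt (q:ℝ) := Real.one_le_sqrt.2 hq1
  have hcos : Real.cos θ = 1 / Real.sqrt (q:ℝ) := by
    apply Real.cos_arccos
    · have : 0 < 1 / Real.sqrt (q:ℝ) := by positivity
      linarith
    · rw [div_le_one hsqrt_pos]; exact hsq1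
  have hsin : Real.sqrt (q:ℝ) * Real.sin θ = s := by
    rw [hθ_def, Real.sin_arccos]
    have h1 : (1 / Real.sqrt (q:ℝ))^2 = 1/(q:ℝ) := by
      rw [div_pow, one_pow, Real.sq_sqrt hq0.le]
    rw [h1, show (1 : ℝ) - 1/(q:ℝ) = ((q:ℝ)-1)/(q:ℝ) by field_simp,
      Real.sqrt_div (by linarith) _]
    field_simp [hs_def]
    exact hs_def.symm
  have hαexp : α = (Real.sqrt (q:ℝ) : ℂ) * Complex.exp ((θ:ℂ) * Complex.I) := by
    rw [Complex.exp_mul_I, hα_def]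
    apply Complex.ext <;>
      simp [Complex.add_re, Complex.add_im, Complex.mul_re, Complex.mul_im,
        ← Complex.ofReal_cos, ← Complex.ofReal_sin, hcos, hsin]
    field_simp
  have hαpow : ∀ Y : ℕ, (α ^ Y).re = Real.sqrt (q:ℝ) ^ Y * Real.cos (Y * θ) := by
    intro Y
    rw [hαexp, mul_pow, ← Complex.exp_nat_mul]
    rw [show ((Y:ℂ) * ((θ:ℂ) * Complex.I)) = ((Y * θ : ℝ) : ℂ) * Complex.I by
      push_cast; ring]
    rw [show ((Real.sqrt (q:ℝ) : ℂ))^Y = ((Real.sqrt (q:ℝ)^Y : ℝ) : ℂ) by push_cast; ring]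
    rw [Complex.re_ofReal_mul, Complex.exp_ofReal_mul_I_re]
  rw [hre X, hαpow (X+1)]
  push_cast
  ring_nf

lemma finite_bounded_den (ξ : ℝ) (N : ℕ) :
    {r : ℚ | |ξ - (r:ℝ)| < 1 ∧ r.den ≤ N}.Finite := by
  obtain ⟨M, hM⟩ := exists_nat_gt ((|ξ|+1) * N)
  apply Set.Finite.subset (Set.Finite.image (f := fun p : ℤ × ℕ => ((p.1 : ℚ))/(p.2 : ℚ))
    (Set.Finite.prod (Set.finite_Icc (-(M:ℤ)) M) (Set.finite_Icc 0 N)))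
  rintro r ⟨h1, h2⟩
  have hden0 : (0:ℝ) < (r.den : ℝ) := by exact_mod_cast r.pos
  have habs : |(r:ℝ)| ≤ |ξ| + 1 := by
    have := abs_sub_abs_le_abs_sub (r:ℝ) ξ
    rw [abs_sub_comm] at h1
    linarith
  have hnum : |(r.num : ℝ)| ≤ (|ξ|+1) * N := by
    have h3 : ((r.num : ℝ)) = (r:ℝ) * r.den := by
      rw [Rat.cast_def]; field_simp
    rw [h3, abs_mul, abs_of_pos hden0]
    have h4 : (r.den : ℝ) ≤ N := by exact_mod_cast h2
    have := abs_nonneg (r:ℝ)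
    nlinarith
  have hnum' : |r.num| ≤ (M:ℤ) := by
    have h5 : |(r.num:ℝ)| ≤ (M:ℝ) := le_trans hnum (le_of_lt hM)
    rw [← Int.cast_abs] at h5
    exact_mod_cast h5
  refine ⟨(r.num, r.den), Set.mem_prod.mpr ⟨Set.mem_Icc.mpr
    ⟨neg_le_of_abs_le hnum', le_of_abs_le hnum'⟩,
    Set.mem_Icc.mpr ⟨Nat.zero_le _, h2⟩⟩, Rat.num_div_den r⟩

lemma exists_large_den {ξ : ℝ} (hξ : Irrational ξ) (N : ℕ) :
    ∃ r : ℚ, N < r.den ∧ |ξ - (r:ℝ)| < 1 / (r.den:ℝ)^2 := by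
  have hinf := Real.infinite_rat_abs_sub_lt_one_div_den_sq_of_irrational hξ
  obtain ⟨r, hr, hr2⟩ := (hinf.diff (finite_bounded_den ξ N)).nonempty
  refine ⟨r, ?_, hr⟩
  by_contra h
  push_neg at h
  apply hr2
  constructor
  · have hd1 : (1:ℝ) ≤ (r.den:ℝ) := by exact_mod_cast r.pos
    calc |ξ - (r:ℝ)| < 1 / (r.den:ℝ)^2 := hr
    _ ≤ 1 := by rw [div_le_one (by positivity)]; nlinarith
  · exact h

theorem mertens_conjecture_trace_two (q a : ℤ) (hq : 2 ≤ q) (ha : a = 2) :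
    (∀ X : ℕ, 1 ≤ X → |(mertM q a X : ℝ)| ≤ (q : ℝ) ^ ((X : ℝ) / 2)) ∧
    (Irrational (Real.arccos (1 / Real.sqrt (q : ℝ)) / Real.pi) →
      ∀ ε : ℝ, 0 < ε → ∀ X₀ : ℕ, ∃ X : ℕ, X₀ ≤ X ∧ 1 ≤ X ∧
        |(mertM q a X : ℝ)| > (1 - ε) * (q : ℝ) ^ ((X : ℝ) / 2)) := by
  subst ha
  have hq2 : (2:ℝ) ≤ (q:ℝ) := by exact_mod_cast hq
  have hq0 : (0:ℝ) < (q:ℝ) := by linarith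
  set θ : ℝ := Real.arccos (1 / Real.sqrt (q:ℝ)) with hθ_def
  have hsqrt_pos : 0 < Real.sqrt (q:ℝ) := Real.sqrt_pos.2 hq0
  have key : ∀ X : ℕ, 1 ≤ X →
      ((mertM q 2 X : ℤ) : ℝ) = Real.sqrt (q:ℝ) ^ X * Real.cos (X * θ) := by
    intro X hX
    obtain ⟨Y, rfl⟩ : ∃ Y, X = Y + 1 := ⟨X - 1, (Nat.succ_pred_eq_of_pos hX).symm⟩
    have h := mertM_formula q hq Y
    rw [← hθ_def] at h
    rw [h]
    push_cast
    ring_nf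
  have hrpow : ∀ X : ℕ, (q:ℝ) ^ ((X:ℝ)/2) = Real.sqrt (q:ℝ) ^ X := by
    intro X
    rw [Real.sqrt_eq_rpow, ← Real.rpow_natCast ((q:ℝ) ^ ((1:ℝ)/2)) X,
      ← Real.rpow_mul hq0.le]
    congr 1
    ring
  constructor
  · intro X hX
    rw [key X hX, hrpow, abs_mul, abs_of_pos (pow_pos hsqrt_pos X)]
    calc Real.sqrt (q:ℝ) ^ X * |Real.cos (X * θ)|
        ≤ Real.sqrt (q:ℝ) ^ X * 1 :=
          mul_le_mul_of_nonneg_left (Real.abs_cos_le_one _) (pow_pos hsqrt_pos X).le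
    _ = Real.sqrt (q:ℝ) ^ X := mul_one _
  · intro hirr ε hε X₀
    set ξ : ℝ := θ / π with hξ_def
    have hπ : (0:ℝ) < π := Real.pi_pos
    have hev : ∀ᶠ t in 𝓝 (0:ℝ), 1 - ε < Real.cos t := by
      have hc : Filter.Tendsto Real.cos (𝓝 0) (𝓝 1) := by
        have := Real.continuous_cos.continuousAt (x := 0)
        rwa [ContinuousAt, Real.cos_zero] at this
      exact hc.eventually_const_lt (by linarith)
    obtain ⟨δ, hδ0, hδ⟩ := Metric.eventually_nhds_iff.mp hev
    obtain ⟨K, hK⟩ := exists_nat_gt (π/δ)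
    obtain ⟨r, hrden, hr⟩ := exists_large_den hirr (max X₀ K)
    set n : ℕ := r.den with hn_def
    have hn0 : (0:ℝ) < n := by exact_mod_cast r.pos
    have hn1 : 1 ≤ n := r.pos
    have hnX₀ : X₀ ≤ n := le_of_lt (lt_of_le_of_lt (le_max_left _ _) hrden)
    have hnK : (K:ℝ) < (n:ℝ) := by exact_mod_cast lt_of_le_of_lt (le_max_right _ _) hrden
    -- the key angle estimate
    set t : ℝ := ((n:ℝ) * ξ - r.num) * π with ht_def
    have hsplit : (n:ℝ) * θ = t + (r.num : ℝ) * π := by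
      rw [ht_def, hξ_def]
      field_simp
      ring
    have htsmall : |t| < δ := by
      have h6 : (n:ℝ) * ξ - (r.num:ℝ) = (n:ℝ) * (ξ - (r:ℝ)) := by
        rw [Rat.cast_def, ← hn_def]
        field_simp
      have h7 : |t| = (n:ℝ) * |ξ - (r:ℝ)| * π := by
        rw [ht_def, h6, abs_mul, abs_mul, abs_of_pos hn0, abs_of_pos hπ]
      have h8 : (n:ℝ) * |ξ - (r:ℝ)| * π < (n:ℝ) * (1/(n:ℝ)^2) * π :=
        mul_lt_mul_of_pos_right (mul_lt_mul_of_pos_left hr hn0) hπ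
      have h9 : (n:ℝ) * (1/(n:ℝ)^2) * π = π / n := by field_simp
      have h10 : π / n < δ := by
        rw [div_lt_iff₀ hn0]
        have : π / δ < (n:ℝ) := lt_trans hK hnK
        rw [div_lt_iff₀ hδ0] at this
        linarith
      rw [h7]
      linarith [h8, h9.symm ▸ h8]
    have hcost : 1 - ε < Real.cos t := hδ (by rwa [Real.dist_0_eq_abs])
    have habs : 1 - ε < |Real.cos ((n:ℝ) * θ)| := by
      have hone : |((-1:ℝ)) ^ r.num| = 1 := by
        rcases Int.even_or_odd r.num with he | ho
        · rw [he.neg_one_zpow, abs_one]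
        · rw [ho.neg_one_zpow, abs_neg, abs_one]
      rw [hsplit, Real.cos_add_int_mul_pi, abs_mul, hone, one_mul]
      exact lt_of_lt_of_le hcost (le_abs_self _)
    refine ⟨n, hnX₀, hn1, ?_⟩
    rw [key n hn1, hrpow, abs_mul, abs_of_pos (pow_pos hsqrt_pos n)]
    calc (1 - ε) * Real.sqrt (q:ℝ) ^ n
        < |Real.cos ((n:ℝ) * θ)| * Real.sqrt (q:ℝ) ^ n :=
          mul_lt_mul_of_pos_right habs (pow_pos hsqrt_pos n)
    _ = Real.sqrt (q:ℝ) ^ n * |Real.cos ((n:ℝ) * θ)| := mul_comm _ _
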